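/- arXiv:2104.06062 — 5 statements merged into one kernel-verified Lean document; each statement's English description precedes it below -/
import Mathlib

section
/- For integers d ≥ 2 and N ≥ 1 and any real x with 1 ≤ x ≤ d², we have (d^N + x^N)/(d^N(d^N + 1)) ≤ ((d + x)/(d(d + 1)))^N. -/
lemma aux_key (D x : ℝ) (hD : 2 ≤ D) (hx1 : 1 ≤ x) (hx2 : x ≤ D ^ 2) (n : ℕ) (hn : 1 ≤ n) :
    (D ^ (n + 1) + x ^ (n + 1)) * (D + 1) * (D ^ n + 1) ≤
      (D + x) * (D ^ n + x ^ n) * (D ^ (n + 1) + 1) := by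
  obtain ⟨m, rfl⟩ := Nat.exists_eq_add_of_le hn
  have hD0 : (0:ℝ) < D := by linarith
  have hP : (0:ℝ) ≤ D ^ m := by positivity
  have hxn : x ^ (1 + m) ≤ (D ^ (1 + m)) ^ 2 := by
    rw [← pow_mul, mul_comm (1+m) 2, pow_mul]
    exact pow_le_pow_left₀ (by linarith) hx2 _
  have hxn1 : 1 ≤ x ^ (1 + m) := by
    calc (1:ℝ) = 1 ^ (1 + m) := (one_pow _).symm
      _ ≤ x ^ (1 + m) := pow_le_pow_left₀ zero_le_one hx1 _
  have h1 : 0 ≤ D * ((x - 1) * ((D ^ (1 + m)) ^ 2 - x ^ (1 + m))) := by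
    apply mul_nonneg hD0.le
    apply mul_nonneg (by linarith) (by linarith)
  have h2 : 0 ≤ D * (D ^ m * (D ^ 2 - x) * (x ^ (1 + m) - 1)) := by
    apply mul_nonneg hD0.le
    apply mul_nonneg (mul_nonneg hP (by linarith)) (by linarith)
  have e1 : D ^ (1 + m + 1) = D ^ 2 * D ^ m := by ring
  have e2 : x ^ (1 + m + 1) = x ^ 2 * x ^ m := by ring
  have e3 : D ^ (1 + m) = D * D ^ m := by ring
  have e4 : x ^ (1 + m) = x * x ^ m := by ring
  simp only [e1, e2, e3, e4] at h1 h2 ⊢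
  nlinarith [h1, h2]

lemma aux_main (D x : ℝ) (hD : 2 ≤ D) (hx1 : 1 ≤ x) (hx2 : x ≤ D ^ 2) (N : ℕ) (hN : 1 ≤ N) :
    (D ^ N + x ^ N) * (D + 1) ^ N ≤ (D + x) ^ N * (D ^ N + 1) := by
  induction N, hN using Nat.le_induction with
  | base => ring_nf; nlinarith
  | succ n hn ih =>
    have hD0 : (0:ℝ) < D := by linarith
    have hpos : (0:ℝ) < D ^ n + 1 := by positivity
    have hkey := aux_key D x hD hx1 hx2 n hn
    have hmul : (D ^ n + x ^ n) * (D + 1) ^ n * ((D + x) * (D ^ (n+1) + 1)) ≤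
        (D + x) ^ n * (D ^ n + 1) * ((D + x) * (D ^ (n+1) + 1)) := by
      apply mul_le_mul_of_nonneg_right ih
      have : (0:ℝ) < (D + x) * (D ^ (n+1) + 1) := by positivity
      linarith
    have hmul2 : (D ^ (n+1) + x ^ (n+1)) * (D + 1) * (D ^ n + 1) * (D + 1) ^ n ≤
        (D + x) * (D ^ n + x ^ n) * (D ^ (n+1) + 1) * (D + 1) ^ n := by
      apply mul_le_mul_of_nonneg_right hkey
      positivity
    have : (D ^ (n+1) + x ^ (n+1)) * (D + 1) ^ (n+1) * (D ^ n + 1) ≤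
        (D + x) ^ (n+1) * (D ^ (n+1) + 1) * (D ^ n + 1) := by
      calc (D ^ (n+1) + x ^ (n+1)) * (D + 1) ^ (n+1) * (D ^ n + 1)
          = (D ^ (n+1) + x ^ (n+1)) * (D + 1) * (D ^ n + 1) * (D + 1) ^ n := by ring
        _ ≤ (D + x) * (D ^ n + x ^ n) * (D ^ (n+1) + 1) * (D + 1) ^ n := hmul2
        _ = (D ^ n + x ^ n) * (D + 1) ^ n * ((D + x) * (D ^ (n+1) + 1)) := by ring
        _ ≤ (D + x) ^ n * (D ^ n + 1) * ((D + x) * (D ^ (n+1) + 1)) := hmul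
        _ = (D + x) ^ (n+1) * (D ^ (n+1) + 1) * (D ^ n + 1) := by ring
    exact le_of_mul_le_mul_right (by linarith) hpos

theorem stmt_0 (d N : ℕ) (hd : 2 ≤ d) (hN : 1 ≤ N) (x : ℝ)
    (hx1 : 1 ≤ x) (hx2 : x ≤ (d : ℝ) ^ 2) :
    ((d : ℝ) ^ N + x ^ N) / ((d : ℝ) ^ N * ((d : ℝ) ^ N + 1)) ≤
      (((d : ℝ) + x) / ((d : ℝ) * ((d : ℝ) + 1))) ^ N := by
  set D : ℝ := (d : ℝ) with hDdef
  have hD : (2:ℝ) ≤ D := by show (2:ℝ) ≤ (d:ℝ); exact_mod_cast hd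
  have hD0 : (0:ℝ) < D := by linarith
  have h1 : (0:ℝ) < D ^ N * (D ^ N + 1) := by positivity
  have h2 : (0:ℝ) < (D * (D + 1)) ^ N := by positivity
  rw [div_pow, div_le_div_iff₀ h1 h2]
  have key := aux_main D x hD hx1 hx2 N hN
  have hDN : (0:ℝ) ≤ D ^ N := by positivity
  calc (D ^ N + x ^ N) * (D * (D + 1)) ^ N
      = (D ^ N + x ^ N) * (D + 1) ^ N * D ^ N := by rw [mul_pow]; ring
    _ ≤ (D + x) ^ N * (D ^ N + 1) * D ^ N := mul_le_mul_of_nonneg_right key hDN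
    _ = (D + x) ^ N * (D ^ N * (D ^ N + 1)) := by ring
end

section
/- Let T be a d×d column-stochastic matrix such that in each row there is a strictly unique maximal entry. If the (unique) quasi-inverse T^{qi} of T (obtained by placing a 1 at the unique row-maximum of each row and transposing) equals T itself, then T is a symmetric permutation matrix, i.e., T is a permutation matrix with T = Tᵀ. -/
open Matrix

/-- A `d × d` real matrix is column-stochastic if all entries are nonnegative
and each column sums to `1`. -/
def ColStoch {d : ℕ} (T : Matrix (Fin d) (Fin d) ℝ) : Prop :=
  (∀ i j, 0 ≤ T i j) ∧ ∀ j, ∑ i, T i j = 1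

theorem stmt_8 (d : ℕ) (T : Matrix (Fin d) (Fin d) ℝ) (hT : ColStoch T)
    (a : Fin d → Fin d) (ha : ∀ i j, j ≠ a i → T i j < T i (a i))
    (hqi : (Matrix.of fun j i => if j = a i then (1 : ℝ) else 0) = T) :
    ∃ σ : Equiv.Perm (Fin d), T = Equiv.Perm.permMatrix ℝ σ ∧ Tᵀ = T := by
  have hTval : ∀ j i, T j i = if j = a i then (1 : ℝ) else 0 := by
    intro j i; rw [← hqi]; rfl
  have hinv : Function.Involutive a := by
    intro i
    by_contra h
    have hii : i ≠ a i := by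
      intro he; exact h (by rw [← he, ← he])
    have h1 : T i (a i) = 0 := by
      rw [hTval, if_neg (fun he => h he.symm)]
    have h2 := ha i i hii
    have h3 := hT.1 i i
    rw [h1] at h2; linarith
  refine ⟨hinv.toPerm, ?_, ?_⟩
  · ext i j
    simp only [Equiv.Perm.permMatrix, PEquiv.toMatrix_apply, Equiv.toPEquiv_apply,
      Function.Involutive.coe_toPerm, Option.mem_def, Option.some_inj]
    rw [hTval]
    by_cases h : i = a j
    · simp [h, hinv j]
    · have h' : j ≠ a i := fun he => h (by rw [he, hinv i])
      simp [h, h', Ne.symm h']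
  · ext i j
    rw [transpose_apply, hTval, hTval]
    by_cases h : i = a j
    · simp [h, hinv j]
    · have h' : j ≠ a i := fun he => h (by rw [he, hinv i])
      simp [h, h']
end

section
/- Let E and E' be quantum channels on a d-dimensional Hilbert space with superoperators Φ_E and Φ_{E'}, and let C_E = Φ_E^R be the Choi matrix of E (with trace d) and p_m its largest eigenvalue. Then trace(Φ_{E'} Φ_E) ≤ d·p_m; consequently the average fidelity of the composition satisfies F̄(E'∘E) ≤ (p_m + 1)/(d + 1). -/
open Matrix Kronecker

/-- The superoperator `Φ = Σ_α K_α ⊗ conj(K_α)` of a channel with Kraus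
operators `K_α`. -/
noncomputable def superOp {d r : ℕ} (K : Fin r → Matrix (Fin d) (Fin d) ℂ) :
    Matrix (Fin d × Fin d) (Fin d × Fin d) ℂ :=
  ∑ α, K α ⊗ₖ (K α).map (starRingEnd ℂ)

/-- The Choi matrix `C = Σ_α |K_α⟩⟨K_α|` (the reshuffling of the superoperator):
`C_{(i,j),(k,l)} = Σ_α (K_α)_{ij} conj((K_α)_{kl})`. -/
noncomputable def choi {d r : ℕ} (K : Fin r → Matrix (Fin d) (Fin d) ℂ) :
    Matrix (Fin d × Fin d) (Fin d × Fin d) ℂ :=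
  Matrix.of fun p q => ∑ α, K α p.1 p.2 * (starRingEnd ℂ) (K α q.1 q.2)

/-- Rayleigh quotient bound for a Hermitian matrix. -/
lemma rayleigh' {n : Type*} [Fintype n] [DecidableEq n] [Nonempty n] {A : Matrix n n ℂ}
    (hA : A.IsHermitian) (v : n → ℂ) :
    (star v ⬝ᵥ A *ᵥ v).re ≤ (⨆ i, hA.eigenvalues i) * (star v ⬝ᵥ v).re := by
  have hUU : (hA.eigenvectorUnitary : Matrix n n ℂ) * star (hA.eigenvectorUnitary : Matrix n n ℂ) = 1 :=
    Unitary.mul_star_self_of_mem hA.eigenvectorUnitary.2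
  set y : n → ℂ := star (hA.eigenvectorUnitary : Matrix n n ℂ) *ᵥ v with hy
  have hsy : star y = star v ᵥ* (hA.eigenvectorUnitary : Matrix n n ℂ) := by
    rw [hy, star_mulVec, star_eq_conjTranspose, conjTranspose_conjTranspose]
  have h1 : star v ⬝ᵥ A *ᵥ v =
      ∑ i, (hA.eigenvalues i : ℂ) * (star (y i) * y i) := by
    conv_lhs => rw [hA.spectral_theorem, Unitary.conjStarAlgAut_apply]
    rw [← mulVec_mulVec, ← mulVec_mulVec, dotProduct_mulVec, ← hsy]
    simp [dotProduct, mulVec_diagonal, hy]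
    exact Finset.sum_congr rfl fun i _ => by ring
  have h2 : star v ⬝ᵥ v = star y ⬝ᵥ y := by
    rw [hsy, hy, ← dotProduct_mulVec, mulVec_mulVec, hUU, one_mulVec]
  have hb : BddAbove (Set.range fun i => hA.eigenvalues i) :=
    (Set.finite_range _).bddAbove
  have h3 : ∀ i, (star (y i) * y i).re = Complex.normSq (y i) := by
    intro i; simp [Complex.normSq_apply, Complex.mul_re]
  calc (star v ⬝ᵥ A *ᵥ v).re = ∑ i, hA.eigenvalues i * Complex.normSq (y i) := by
        rw [h1]; simp [Complex.re_sum, Complex.normSq_apply, Complex.mul_re]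
    _ ≤ ∑ i, (⨆ j, hA.eigenvalues j) * Complex.normSq (y i) := by
        apply Finset.sum_le_sum
        intro i _
        exact mul_le_mul_of_nonneg_right (le_ciSup hb i) (Complex.normSq_nonneg _)
    _ = (⨆ j, hA.eigenvalues j) * (star y ⬝ᵥ y).re := by
        rw [← Finset.mul_sum]
        congr 1
        simp [dotProduct, Complex.re_sum, h3, Complex.normSq_apply]
    _ = _ := by rw [h2]

lemma trace_map_conj {n : Type*} [Fintype n] (A : Matrix n n ℂ) :
    (A.map (starRingEnd ℂ)).trace = (starRingEnd ℂ) A.trace := by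
  simp [Matrix.trace, Matrix.diag, map_sum]

lemma traceA {d r r' : ℕ} (K : Fin r → Matrix (Fin d) (Fin d) ℂ)
    (K' : Fin r' → Matrix (Fin d) (Fin d) ℂ) :
    ((superOp K') * (superOp K)).trace =
      ∑ β, ∑ α, (K' β * K α).trace * (starRingEnd ℂ) ((K' β * K α).trace) := by
  rw [superOp, superOp, Finset.sum_mul_sum]
  rw [Matrix.trace_sum]
  refine Finset.sum_congr rfl fun β _ => ?_
  rw [Matrix.trace_sum]
  refine Finset.sum_congr rfl fun α _ => ?_
  rw [← Matrix.mul_kronecker_mul, Matrix.trace_kronecker, ← Matrix.map_mul, trace_map_conj]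

lemma dot_choi {d r : ℕ} (K : Fin r → Matrix (Fin d) (Fin d) ℂ)
    (v : Fin d × Fin d → ℂ) :
    star v ⬝ᵥ choi K *ᵥ v =
      ∑ α, (∑ p, star (v p) * K α p.1 p.2) *
        (starRingEnd ℂ) (∑ p, star (v p) * K α p.1 p.2) := by
  simp only [dotProduct, mulVec, choi, Matrix.of_apply, Pi.star_apply, Finset.mul_sum,
    Finset.sum_mul, map_sum, _root_.map_mul, Complex.star_def, Complex.conj_conj,
    RingHom.id_apply]
  rw [Finset.sum_comm]
  refine Eq.trans (Finset.sum_congr rfl fun q _ => Finset.sum_comm) ?_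
  refine Eq.trans Finset.sum_comm ?_
  exact Finset.sum_congr rfl fun α _ => Finset.sum_congr rfl fun q _ =>
    Finset.sum_congr rfl fun p _ => by ring

lemma dotA {d r r' : ℕ} (K : Fin r → Matrix (Fin d) (Fin d) ℂ)
    (K' : Fin r' → Matrix (Fin d) (Fin d) ℂ) (β : Fin r') :
    star (fun p : Fin d × Fin d => (starRingEnd ℂ) (K' β p.2 p.1)) ⬝ᵥ
        choi K *ᵥ (fun p : Fin d × Fin d => (starRingEnd ℂ) (K' β p.2 p.1)) =
      ∑ α, (K' β * K α).trace * (starRingEnd ℂ) ((K' β * K α).trace) := by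
  rw [dot_choi]
  refine Finset.sum_congr rfl fun α _ => ?_
  have h : (∑ p : Fin d × Fin d,
      star ((starRingEnd ℂ) (K' β p.2 p.1)) * K α p.1 p.2) = (K' β * K α).trace := by
    simp only [Complex.star_def, Complex.conj_conj, trace, diag, mul_apply,
      Fintype.sum_prod_type]
    exact Finset.sum_comm
  rw [h]

theorem stmt_12 (d r r' : ℕ) (hd : 0 < d)
    (K : Fin r → Matrix (Fin d) (Fin d) ℂ) (hK : ∑ α, (K α)ᴴ * K α = 1)
    (K' : Fin r' → Matrix (Fin d) (Fin d) ℂ) (hK' : ∑ β, (K' β)ᴴ * K' β = 1)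
    (hC : (choi K).IsHermitian) :
    ((superOp K') * (superOp K)).trace.re ≤ (d : ℝ) * (⨆ i, hC.eigenvalues i) ∧
      ((d : ℝ) + ((superOp K') * (superOp K)).trace.re) / ((d : ℝ) * ((d : ℝ) + 1)) ≤
        ((⨆ i, hC.eigenvalues i) + 1) / ((d : ℝ) + 1) := by
  haveI : Nonempty (Fin d × Fin d) := ⟨(⟨0, hd⟩, ⟨0, hd⟩)⟩
  set x : Fin r' → (Fin d × Fin d) → ℂ := fun β p => (starRingEnd ℂ) (K' β p.2 p.1) with hx
  set pm := (⨆ i, hC.eigenvalues i) with hpm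
  have hTr : ((superOp K') * (superOp K)).trace = ∑ β, star (x β) ⬝ᵥ choi K *ᵥ (x β) := by
    rw [traceA]
    exact Finset.sum_congr rfl fun β _ => (dotA K K' β).symm
  have h1 : ∀ β, star (x β) ⬝ᵥ x β = ((K' β)ᴴ * K' β).trace := by
    intro β
    simp only [dotProduct, Pi.star_apply, hx, Complex.star_def, Complex.conj_conj, trace,
      diag, mul_apply, conjTranspose_apply, Fintype.sum_prod_type]
    exact Finset.sum_congr rfl fun i _ => Finset.sum_congr rfl fun j _ => by ring
  have hsum : ∑ β, star (x β) ⬝ᵥ x β = (d : ℂ) := by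
    rw [Finset.sum_congr rfl (fun β _ => h1 β), ← Matrix.trace_sum, hK', Matrix.trace_one]
    simp
  have hsumre : ∑ β, (star (x β) ⬝ᵥ x β).re = (d : ℝ) := by
    rw [← Complex.re_sum, hsum, Complex.natCast_re]
  have hT : ((superOp K') * (superOp K)).trace.re ≤ (d : ℝ) * pm := by
    rw [hTr, Complex.re_sum]
    calc ∑ β, (star (x β) ⬝ᵥ choi K *ᵥ (x β)).re
        ≤ ∑ β, pm * (star (x β) ⬝ᵥ x β).re :=
          Finset.sum_le_sum fun β _ => rayleigh' hC (x β)
      _ = pm * ∑ β, (star (x β) ⬝ᵥ x β).re := by rw [Finset.mul_sum]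
      _ = (d : ℝ) * pm := by rw [hsumre, mul_comm]
  refine ⟨hT, ?_⟩
  have hd' : (0 : ℝ) < d := by exact_mod_cast hd
  rw [div_le_div_iff₀ (by positivity) (by positivity)]
  nlinarith [mul_le_mul_of_nonneg_right hT (show (0 : ℝ) ≤ (d : ℝ) + 1 by linarith)]
end

section
/- Let E(ρ) = Σ_{α=1}^{q} X_α ρ X_α† be a channel whose (not necessarily unitary) operators satisfy Σ_α X_α† X_α = Σ_α X_α X_α† = I_d and trace(X_α† X_β) = (d/q)·δ_{αβ}. Then the dual channel E†(ρ) = Σ_α X_α† ρ X_α is a valid quantum channel and satisfies trace(Φ_{E†} Φ_E) = d²/q, saturating the upper bound d·p_m where p_m = d/q is the largest eigenvalue of the Choi matrix of E; hence E† is the quasi-inverse of E and F̄(E†∘E) = (d + q)/(q(d + 1)). -/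
open Matrix Kronecker

lemma trace_superOp_mul {d r r' : ℕ} (K : Fin r' → Matrix (Fin d) (Fin d) ℂ)
    (X : Fin r → Matrix (Fin d) (Fin d) ℂ) :
    (superOp K * superOp X).trace
      = ∑ β, ∑ α, (K β * X α).trace * star ((K β * X α).trace) := by
  unfold superOp
  rw [Finset.sum_mul_sum, Matrix.trace_sum]
  refine Finset.sum_congr rfl fun β _ => ?_
  rw [Matrix.trace_sum]
  refine Finset.sum_congr rfl fun α _ => ?_
  rw [← Matrix.mul_kronecker_mul, Matrix.trace_kronecker, ← Matrix.map_mul]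
  congr 1
  simp [Matrix.trace, Matrix.diag, map_sum]

lemma bessel_bound (d q : ℕ) (hd : 0 < d) (hq : 0 < q)
    (X : Fin q → Matrix (Fin d) (Fin d) ℂ)
    (horth : ∀ α β, ((X α)ᴴ * X β).trace = if α = β then ((d : ℂ) / (q : ℂ)) else 0)
    (r' : ℕ) (K' : Fin r' → Matrix (Fin d) (Fin d) ℂ)
    (hK' : ∑ β, (K' β)ᴴ * K' β = 1) :
    ∑ β, ∑ α, Complex.normSq ((K' β * X α).trace) ≤ (d : ℝ) * ((d : ℝ) / (q : ℝ)) := by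
  have hd' : (d:ℝ) ≠ 0 := Nat.cast_ne_zero.2 hd.ne'
  have hq' : (q:ℝ) ≠ 0 := Nat.cast_ne_zero.2 hq.ne'
  set c : ℝ := Real.sqrt ((q:ℝ)/(d:ℝ)) with hc_def
  have hc2 : c * c = (q:ℝ)/(d:ℝ) := Real.mul_self_sqrt (by positivity)
  set v : Fin q → EuclideanSpace ℂ (Fin d × Fin d) := fun α =>
    (WithLp.equiv 2 (Fin d × Fin d → ℂ)).symm
      (fun p : Fin d × Fin d => (c : ℂ) * X α p.1 p.2) with hv_def
  have hortho : Orthonormal ℂ v := by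
    have hd'' : (d:ℂ) ≠ 0 := Nat.cast_ne_zero.2 hd.ne'
    have hq'' : (q:ℂ) ≠ 0 := Nat.cast_ne_zero.2 hq.ne'
    rw [orthonormal_iff_ite]
    intro α β
    have htr : ((X α)ᴴ * X β).trace
        = ∑ p : Fin d × Fin d, (starRingEnd ℂ) (X α p.1 p.2) * X β p.1 p.2 := by
      rw [Matrix.trace, Fintype.sum_prod_type]
      simp only [Matrix.diag_apply, Matrix.mul_apply, Matrix.conjTranspose_apply]
      rw [Finset.sum_comm]; rfl
    have hc : ((c : ℂ)) * ((c : ℂ)) = ((q:ℂ)/(d:ℂ)) := by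
      rw [← Complex.ofReal_mul, hc2]; push_cast; ring
    simp only [hv_def, PiLp.inner_apply, WithLp.equiv_symm_apply, WithLp.ofLp_toLp, RCLike.inner_apply']
    calc ∑ p : Fin d × Fin d, (starRingEnd ℂ) ((c:ℂ) * X α p.1 p.2) * ((c:ℂ) * X β p.1 p.2)
        = ((q:ℂ)/(d:ℂ)) * ((X α)ᴴ * X β).trace := by
          rw [htr, Finset.mul_sum]
          refine Finset.sum_congr rfl fun p _ => ?_
          simp only [_root_.map_mul, Complex.conj_ofReal]
          rw [← hc]; ring
      _ = if α = β then 1 else 0 := by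
          rw [horth]; split
          · field_simp
          · ring
  -- the vectors x β
  set x : Fin r' → EuclideanSpace ℂ (Fin d × Fin d) := fun β =>
    (WithLp.equiv 2 (Fin d × Fin d → ℂ)).symm
      (fun p : Fin d × Fin d => (starRingEnd ℂ) (K' β p.2 p.1)) with hx_def
  -- inner products
  have hinner : ∀ β α, ‖(inner ℂ (v α) (x β) : ℂ)‖ ^ 2
      = ((q:ℝ)/(d:ℝ)) * Complex.normSq ((K' β * X α).trace) := by
    intro β α
    have : (inner ℂ (v α) (x β) : ℂ)
        = (c:ℂ) * (starRingEnd ℂ) ((K' β * X α).trace) := by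
      simp only [hv_def, hx_def, PiLp.inner_apply, WithLp.equiv_symm_apply, WithLp.ofLp_toLp,
        RCLike.inner_apply', _root_.map_mul, Complex.conj_ofReal]
      have htr : (K' β * X α).trace = ∑ p : Fin d × Fin d, X α p.1 p.2 * K' β p.2 p.1 := by
        rw [Matrix.trace_mul_comm, Matrix.trace, Fintype.sum_prod_type]
        simp only [Matrix.diag_apply, Matrix.mul_apply]
      rw [htr, map_sum, Finset.mul_sum]
      refine Finset.sum_congr rfl fun p _ => ?_
      simp only [_root_.map_mul]
      ring
    rw [this, norm_mul, mul_pow, RCLike.norm_conj, Complex.norm_real, Real.norm_eq_abs,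
      sq_abs, Complex.sq_norm, sq, hc2]
  -- norm of x β
  have hxnorm : ∀ β, ‖x β‖ ^ 2 = ((K' β)ᴴ * K' β).trace.re := by
    intro β
    rw [@norm_sq_eq_re_inner ℂ]
    simp only [hx_def, PiLp.inner_apply, WithLp.equiv_symm_apply, WithLp.ofLp_toLp, RCLike.inner_apply',
      Complex.conj_conj]
    have htr : ((K' β)ᴴ * K' β).trace
        = ∑ p : Fin d × Fin d, (starRingEnd ℂ) (K' β p.2 p.1) * K' β p.2 p.1 := by
      rw [Matrix.trace, Fintype.sum_prod_type]
      simp only [Matrix.diag_apply, Matrix.mul_apply, Matrix.conjTranspose_apply]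
      rfl
    rw [htr]
    simp [Complex.mul_conj', mul_comm]
  have hB : ∀ β, ((q:ℝ)/(d:ℝ)) * ∑ α, Complex.normSq ((K' β * X α).trace)
      ≤ ((K' β)ᴴ * K' β).trace.re := by
    intro β
    calc ((q:ℝ)/(d:ℝ)) * ∑ α, Complex.normSq ((K' β * X α).trace)
        = ∑ α, ‖(inner ℂ (v α) (x β) : ℂ)‖ ^ 2 := by
          rw [Finset.mul_sum]
          exact Finset.sum_congr rfl fun α _ => (hinner β α).symm
      _ ≤ ‖x β‖ ^ 2 := hortho.sum_inner_products_le (x β)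
      _ = ((K' β)ᴴ * K' β).trace.re := hxnorm β
  have hsum : ∑ β, ((K' β)ᴴ * K' β).trace.re = (d:ℝ) := by
    have h := congrArg Matrix.trace hK'
    rw [Matrix.trace_sum, Matrix.trace_one] at h
    have h2 := congrArg Complex.re h
    rw [Complex.re_sum] at h2
    simpa using h2
  have h1 : ((q:ℝ)/(d:ℝ)) * (∑ β, ∑ α, Complex.normSq ((K' β * X α).trace)) ≤ (d:ℝ) := by
    rw [Finset.mul_sum]
    exact le_trans (Finset.sum_le_sum fun β _ => hB β) (le_of_eq hsum)
  calc ∑ β, ∑ α, Complex.normSq ((K' β * X α).trace)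
      = ((d:ℝ)/(q:ℝ)) * (((q:ℝ)/(d:ℝ)) * ∑ β, ∑ α, Complex.normSq ((K' β * X α).trace)) := by
        field_simp
    _ ≤ ((d:ℝ)/(q:ℝ)) * (d:ℝ) := mul_le_mul_of_nonneg_left h1 (by positivity)
    _ = (d:ℝ) * ((d:ℝ)/(q:ℝ)) := by ring

theorem stmt_14 (d q : ℕ) (hd : 0 < d) (hq : 0 < q)
    (X : Fin q → Matrix (Fin d) (Fin d) ℂ)
    (h1 : ∑ α, (X α)ᴴ * X α = 1) (h2 : ∑ α, X α * (X α)ᴴ = 1)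
    (horth : ∀ α β, ((X α)ᴴ * X β).trace = if α = β then ((d : ℂ) / (q : ℂ)) else 0) :
    -- the dual `E†` with Kraus operators `X_α†` is a valid (trace-preserving) channel
    (∑ α, ((X α)ᴴ)ᴴ * (X α)ᴴ = 1) ∧
      -- `trace(Φ_{E†} Φ_E) = d²/q`
      (superOp (fun α => (X α)ᴴ) * superOp X).trace = (d : ℂ) ^ 2 / (q : ℂ) ∧
      -- this saturates the general upper bound `d·p_m` with `p_m = d/q`:
      -- no channel `E'` can do better, so `E†` is the quasi-inverse
      (∀ (r' : ℕ) (K' : Fin r' → Matrix (Fin d) (Fin d) ℂ),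
        ∑ β, (K' β)ᴴ * K' β = 1 →
          (superOp K' * superOp X).trace.re ≤ (d : ℝ) * ((d : ℝ) / (q : ℝ))) ∧
      -- the corrected average fidelity
      ((d : ℝ) + (superOp (fun α => (X α)ᴴ) * superOp X).trace.re) /
          ((d : ℝ) * ((d : ℝ) + 1)) =
        ((d : ℝ) + (q : ℝ)) / ((q : ℝ) * ((d : ℝ) + 1)) := by
  have hd' : (d:ℂ) ≠ 0 := Nat.cast_ne_zero.2 hd.ne'
  have hq' : (q:ℂ) ≠ 0 := Nat.cast_ne_zero.2 hq.ne'
  have hdR : (d:ℝ) ≠ 0 := Nat.cast_ne_zero.2 hd.ne'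
  have hqR : (q:ℝ) ≠ 0 := Nat.cast_ne_zero.2 hq.ne'
  -- Part 2 computation
  have part2 : (superOp (fun α => (X α)ᴴ) * superOp X).trace = (d : ℂ) ^ 2 / (q : ℂ) := by
    rw [trace_superOp_mul]
    have hterm : ∀ β α : Fin q, ((X β)ᴴ * X α).trace * star ((X β)ᴴ * X α).trace
        = if β = α then ((d:ℂ)/(q:ℂ)) * ((d:ℂ)/(q:ℂ)) else 0 := by
      intro β α
      rw [horth]
      split
      · congr 1
        simp [Complex.star_def, map_div₀]
      · simp
    calc (∑ β, ∑ α, ((X β)ᴴ * X α).trace * star (((X β)ᴴ * X α).trace))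
        = ∑ β : Fin q, ((d:ℂ)/(q:ℂ)) * ((d:ℂ)/(q:ℂ)) := by
          refine Finset.sum_congr rfl fun β _ => ?_
          simp_rw [hterm]
          simp
      _ = (q:ℂ) * (((d:ℂ)/(q:ℂ)) * ((d:ℂ)/(q:ℂ))) := by
          rw [Finset.sum_const, Finset.card_univ, Fintype.card_fin, nsmul_eq_mul]
      _ = (d : ℂ) ^ 2 / (q : ℂ) := by field_simp
  have reEq : ∀ (r' : ℕ) (K' : Fin r' → Matrix (Fin d) (Fin d) ℂ),
      (superOp K' * superOp X).trace.re
        = ∑ β, ∑ α, Complex.normSq ((K' β * X α).trace) := by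
    intro r' K'
    rw [trace_superOp_mul]
    rw [Complex.re_sum]
    refine Finset.sum_congr rfl fun β _ => ?_
    rw [Complex.re_sum]
    refine Finset.sum_congr rfl fun α _ => ?_
    rw [show (star ((K' β * X α).trace)) = (starRingEnd ℂ) ((K' β * X α).trace) from rfl,
      Complex.mul_conj]
    simp
  refine ⟨by simpa using h2, part2, ?_, ?_⟩
  · intro r' K' hK'
    rw [reEq]
    exact bessel_bound d q hd hq X horth r' K' hK'
  · have : (superOp (fun α => (X α)ᴴ) * superOp X).trace.re = (d:ℝ)^2/(q:ℝ) := by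
      rw [part2]
      rw [show ((d:ℂ)^2/(q:ℂ)) = (((d:ℝ)^2/(q:ℝ) : ℝ) : ℂ) by push_cast; ring]
      exact Complex.ofReal_re _
    rw [this]
    field_simp
    ring
end

section
/- Let d ≥ 2 and let d₁, d₂, m₁, m₂ be positive integers with d₁ + d₂ = m₁ + m₂ = d. Define the measure-and-prepare map E(ρ) = (1/d₁)·trace(Q₁ρ)·P₁ + (1/d₂)·trace(Q₂ρ)·P₂, where P₁, P₂ (resp. Q₁, Q₂) are complementary orthogonal projectors of ranks d₁, d₂ (resp. m₁, m₂). Let A = (m₂Q₁ − m₁Q₂)/√(m₁m₂) and B = (d₂P₁ − d₁P₂)/√(d₁d₂). Then for the state ρ = (1/d)(I + xA) with x ∈ ℝ (whenever ρ ≥ 0), one has E(ρ) = (1/d)(I + x′B) with x′ = √(m₁m₂/(d₁d₂))·x + (m₁d₂ − m₂d₁)/(d√(d₁d₂)). In particular, if m₁m₂ > d₁d₂ the Bloch coefficient is stretched: |coefficient of x′ in x| > 1. -/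
open Matrix ComplexOrder

lemma trace_of_idem {n : ℕ} (Q : Matrix (Fin n) (Fin n) ℂ) (h : Q * Q = Q) :
    Q.trace = (Q.rank : ℂ) := by
  have hf : LinearMap.IsProj (LinearMap.range Q.mulVecLin) Q.mulVecLin := by
    constructor
    · intro x; exact LinearMap.mem_range_self _ x
    · rintro x ⟨y, rfl⟩
      have := congrArg Matrix.mulVecLin h
      rw [Matrix.mulVecLin_mul] at this
      exact congrFun (congrArg DFunLike.coe this) y
  have ht := hf.trace
  rw [Matrix.rank, ← ht,
    LinearMap.trace_eq_matrix_trace ℂ (Pi.basisFun ℂ (Fin n))]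
  congr 1
  ext i j
  simp [LinearMap.toMatrix_apply, Matrix.mulVecLin, Matrix.mulVec, dotProduct, Pi.basisFun_apply, Pi.single_apply]

theorem stmt_18 (d d1 d2 m1 m2 : ℕ) (hd : 2 ≤ d)
    (hd1 : 0 < d1) (hd2 : 0 < d2) (hm1 : 0 < m1) (hm2 : 0 < m2)
    (hdsum : d1 + d2 = d) (hmsum : m1 + m2 = d)
    (P1 P2 Q1 Q2 : Matrix (Fin d) (Fin d) ℂ)
    (hP1h : P1.IsHermitian) (hP2h : P2.IsHermitian)
    (hQ1h : Q1.IsHermitian) (hQ2h : Q2.IsHermitian)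
    (hP1i : P1 * P1 = P1) (hP2i : P2 * P2 = P2)
    (hQ1i : Q1 * Q1 = Q1) (hQ2i : Q2 * Q2 = Q2)
    (hPsum : P1 + P2 = 1) (hQsum : Q1 + Q2 = 1)
    (hPorth : P1 * P2 = 0) (hQorth : Q1 * Q2 = 0)
    (hrP1 : P1.rank = d1) (hrP2 : P2.rank = d2)
    (hrQ1 : Q1.rank = m1) (hrQ2 : Q2.rank = m2)
    (x : ℝ)
    -- the state ρ = (1/d)(I + x·A), assumed positive semidefinite
    (hρ : (((d : ℂ))⁻¹ • (1 + (x : ℂ) •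
        (((Real.sqrt ((m1 : ℝ) * m2) : ℝ) : ℂ)⁻¹ •
          ((m2 : ℂ) • Q1 - (m1 : ℂ) • Q2)))).PosSemidef) :
    -- E(ρ) = (1/d)(I + x′·B) with the stated Bloch coefficient x′
    ((d1 : ℂ))⁻¹ • ((Q1 * (((d : ℂ))⁻¹ • (1 + (x : ℂ) •
          (((Real.sqrt ((m1 : ℝ) * m2) : ℝ) : ℂ)⁻¹ •
            ((m2 : ℂ) • Q1 - (m1 : ℂ) • Q2))))).trace • P1) +
      ((d2 : ℂ))⁻¹ • ((Q2 * (((d : ℂ))⁻¹ • (1 + (x : ℂ) •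
          (((Real.sqrt ((m1 : ℝ) * m2) : ℝ) : ℂ)⁻¹ •
            ((m2 : ℂ) • Q1 - (m1 : ℂ) • Q2))))).trace • P2) =
      ((d : ℂ))⁻¹ • (1 +
        ((Real.sqrt (((m1 : ℝ) * m2) / ((d1 : ℝ) * d2)) * x +
            ((m1 : ℝ) * d2 - (m2 : ℝ) * d1) / ((d : ℝ) * Real.sqrt ((d1 : ℝ) * d2)) : ℝ) : ℂ) •
          (((Real.sqrt ((d1 : ℝ) * d2) : ℝ) : ℂ)⁻¹ •
            ((d2 : ℂ) • P1 - (d1 : ℂ) • P2))) ∧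
      -- if m₁m₂ > d₁d₂, the Bloch coefficient is stretched
      (d1 * d2 < m1 * m2 → 1 < Real.sqrt (((m1 : ℝ) * m2) / ((d1 : ℝ) * d2))) := by
  have hdd : (0:ℝ) < (d1:ℝ) * d2 := by positivity
  have hmm : (0:ℝ) < (m1:ℝ) * m2 := by positivity
  constructor
  · -- main identity
    have hQ21 : Q2 * Q1 = 0 := by
      have : Q2 = 1 - Q1 := by rw [← hQsum]; abel
      rw [this, sub_mul, one_mul, hQ1i, sub_self]
    have ht1 : Q1.trace = (m1 : ℂ) := by rw [trace_of_idem Q1 hQ1i, hrQ1]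
    have ht2 : Q2.trace = (m2 : ℂ) := by rw [trace_of_idem Q2 hQ2i, hrQ2]
    set s : ℝ := Real.sqrt ((m1:ℝ) * m2) with hs_def
    set t : ℝ := Real.sqrt ((d1:ℝ) * d2) with ht_def
    have hs2 : (s:ℂ) * s = ((m1:ℕ):ℂ) * m2 := by
      rw [← Complex.ofReal_mul, Real.mul_self_sqrt hmm.le]; push_cast; ring
    have ht2' : (t:ℂ) * t = ((d1:ℕ):ℂ) * d2 := by
      rw [← Complex.ofReal_mul, Real.mul_self_sqrt hdd.le]; push_cast; ring
    have hsne : (s:ℂ) ≠ 0 := by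
      simp only [ne_eq, Complex.ofReal_eq_zero]
      exact (Real.sqrt_pos.mpr hmm).ne'
    have htne : (t:ℂ) ≠ 0 := by
      simp only [ne_eq, Complex.ofReal_eq_zero]
      exact (Real.sqrt_pos.mpr hdd).ne'
    have hdivsqrt : Real.sqrt (((m1:ℝ) * m2) / ((d1:ℝ) * d2)) = s / t := by
      rw [hs_def, ht_def, Real.sqrt_div hmm.le]
    have e1 : (Q1 * (((d : ℂ))⁻¹ • (1 + (x : ℂ) • ((s:ℂ)⁻¹ •
        ((m2 : ℂ) • Q1 - (m1 : ℂ) • Q2))))).trace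
        = (d:ℂ)⁻¹ * ((m1:ℂ) + (x:ℂ) * ((s:ℂ)⁻¹ * ((m2:ℂ) * m1))) := by
      simp [Matrix.mul_smul, Matrix.mul_add, Matrix.mul_one, Matrix.mul_sub,
        hQ1i, hQorth, ht1, smul_eq_mul]
      ring
    have e2 : (Q2 * (((d : ℂ))⁻¹ • (1 + (x : ℂ) • ((s:ℂ)⁻¹ •
        ((m2 : ℂ) • Q1 - (m1 : ℂ) • Q2))))).trace
        = (d:ℂ)⁻¹ * ((m2:ℂ) - (x:ℂ) * ((s:ℂ)⁻¹ * ((m1:ℂ) * m2))) := by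
      simp [Matrix.mul_smul, Matrix.mul_add, Matrix.mul_one, Matrix.mul_sub,
        hQ2i, hQ21, ht2, smul_eq_mul]
      ring
    rw [e1, e2, hdivsqrt, ← hPsum]
    have hdne : ((d:ℕ):ℂ) ≠ 0 := by
      exact_mod_cast Nat.cast_ne_zero.mpr (by omega)
    have hd1ne : ((d1:ℕ):ℂ) ≠ 0 := Nat.cast_ne_zero.mpr hd1.ne'
    have hd2ne : ((d2:ℕ):ℂ) ≠ 0 := Nat.cast_ne_zero.mpr hd2.ne'
    have hdsum' : ((d1:ℕ):ℂ) + d2 = d := by exact_mod_cast congrArg (Nat.cast : ℕ → ℂ) hdsum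
    have hmsum' : ((m1:ℕ):ℂ) + m2 = d := by exact_mod_cast congrArg (Nat.cast : ℕ → ℂ) hmsum
    match_scalars
    · push_cast
      field_simp
      linear_combination ((d:ℂ)*(m1:ℂ)*(s:ℂ) + (d:ℂ)*(m1:ℂ)*(x:ℂ)*(m2:ℂ) - (d1:ℂ)*(s:ℂ)*(d:ℂ)) * ht2' -
        ((d1:ℂ)*(d2:ℂ)*(d:ℂ)*(x:ℂ)) * hs2 - ((s:ℂ)*(d1:ℂ)*(d2:ℂ)*(m1:ℂ)) * hdsum' +
        ((s:ℂ)*(d1:ℂ)*(d2:ℂ)*(d1:ℂ)) * hmsum'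
    · push_cast
      field_simp
      linear_combination ((d:ℂ)*(m2:ℂ)*(s:ℂ) - (d:ℂ)*(m2:ℂ)*(x:ℂ)*(m1:ℂ) - (d2:ℂ)*(s:ℂ)*(d:ℂ)) * ht2' +
        ((d:ℂ)*(d1:ℂ)*(d2:ℂ)*(x:ℂ)) * hs2 - ((s:ℂ)*(d1:ℂ)*(d2:ℂ)*(m2:ℂ)) * hdsum' +
        ((s:ℂ)*(d1:ℂ)*(d2:ℂ)*(d2:ℂ)) * hmsum'
  · intro h
    rw [show (1:ℝ) = Real.sqrt 1 by simp]
    apply Real.sqrt_lt_sqrt (by norm_num)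
    rw [lt_div_iff₀ hdd, one_mul]
    exact_mod_cast h
end
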